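/- Let p and q be nonprincipal ultrafilters on ℕ and consider the tensor product p ⊗ q as an ultrafilter on ℕ × ℕ. Then the set D = {(pure n) ⊗ q : n ∈ ℕ} is a countable discrete subspace of the space of ultrafilters on ℕ × ℕ consisting of nonprincipal ultrafilters, p ⊗ q ∉ D, and p ⊗ q ∈ closure(D). In particular, p ⊗ q is not a discretely weak P-point of the subspace of nonprincipal ultrafilters on ℕ × ℕ. -/

import Mathlib

open Filter Topology

/-- The tensor (Fubini) product of two ultrafilters on `ℕ`, as an ultrafilter on `ℕ × ℕ`. -/
def tensorProd (p q : Ultrafilter ℕ) : Ultrafilter (ℕ × ℕ) :=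
  p.bind (fun n => q.map (Prod.mk n))

/-- The set of nonprincipal ultrafilters on `ℕ × ℕ`. -/
def omegaStar2 : Set (Ultrafilter (ℕ × ℕ)) :=
  {u : Ultrafilter (ℕ × ℕ) | ∀ s : ℕ × ℕ, u ≠ pure s}

lemma mem_tensorProd {p q : Ultrafilter ℕ} {A : Set (ℕ × ℕ)} :
    A ∈ tensorProd p q ↔ {n | {m | (n, m) ∈ A} ∈ q} ∈ p := Iff.rfl

lemma ultra_eq_pure_iff {α : Type*} (u : Ultrafilter α) (x : α) :
    u = pure x ↔ {x} ∈ u := by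
  constructor
  · rintro rfl; exact rfl
  · intro h
    have h2 : (u : Filter α) = pure x := (u.neBot.eq_pure_iff).mpr h
    exact Ultrafilter.coe_injective (by simpa using h2)

lemma tensor_ne_pure (p q : Ultrafilter ℕ) (hq : ∀ n : ℕ, q ≠ pure n) :
    ∀ s : ℕ × ℕ, tensorProd p q ≠ pure s := by
  rintro ⟨a, b⟩ h
  have h1 : ({(a, b)} : Set (ℕ × ℕ)) ∈ tensorProd p q := (ultra_eq_pure_iff _ _).mp h
  rw [mem_tensorProd] at h1
  have h2 : {n | {m | (n, m) ∈ ({(a, b)} : Set (ℕ × ℕ))} ∈ q} = (∅ : Set ℕ) := by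
    ext n
    simp only [Set.mem_setOf_eq, Set.mem_singleton_iff, Prod.mk.injEq, Set.mem_empty_iff_false,
      iff_false]
    intro hh
    have hb : ({b} : Set ℕ) ∈ q := Filter.mem_of_superset hh (by intro m hm; exact hm.2)
    exact hq b ((ultra_eq_pure_iff q b).mpr hb)
  rw [h2] at h1
  exact (Filter.empty_notMem _) h1

lemma memB_iff (q : Ultrafilter ℕ) (r : Ultrafilter ℕ) (n : ℕ) :
    (Prod.fst ⁻¹' {n} : Set (ℕ × ℕ)) ∈ tensorProd r q ↔ ({n} : Set ℕ) ∈ r := by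
  rw [mem_tensorProd]
  have h : {k | {m | (k, m) ∈ (Prod.fst ⁻¹' {n} : Set (ℕ × ℕ))} ∈ q} = ({n} : Set ℕ) := by
    ext k
    by_cases hk : k = n
    · subst hk
      have he : {m | (k, m) ∈ (Prod.fst ⁻¹' {k} : Set (ℕ × ℕ))} = Set.univ := by
        ext m; simp
      simp only [Set.mem_setOf_eq, he, Set.mem_singleton_iff, iff_true]
      exact Filter.univ_mem
    · simp [hk]
  rw [h]

lemma tensor_pure_inj (q : Ultrafilter ℕ) {n m : ℕ}
    (h : tensorProd (pure n) q = tensorProd (pure m) q) : n = m := by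
  have h1 : (Prod.fst ⁻¹' {m} : Set (ℕ × ℕ)) ∈ tensorProd (pure m) q :=
    (memB_iff q (pure m) m).mpr rfl
  rw [← h, memB_iff] at h1
  simpa using h1

lemma tensor_notmem_range (p q : Ultrafilter ℕ) (hp : ∀ n : ℕ, p ≠ pure n) :
    tensorProd p q ∉ (Set.range fun n : ℕ => tensorProd (pure n) q) := by
  rintro ⟨n, hn⟩
  have h1 : (Prod.fst ⁻¹' {n} : Set (ℕ × ℕ)) ∈ tensorProd p q := by
    rw [← hn]; exact (memB_iff q (pure n) n).mpr rfl
  exact hp n ((ultra_eq_pure_iff p n).mpr ((memB_iff q p n).mp h1))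

lemma tensor_mem_closure (p q : Ultrafilter ℕ) :
    tensorProd p q ∈ closure (Set.range fun n : ℕ => tensorProd (pure n) q) := by
  rw [ultrafilterBasis_is_basis.mem_closure_iff]
  rintro t ⟨A, rfl⟩ hA
  have hA' : {n | {m | (n, m) ∈ A} ∈ q} ∈ p := mem_tensorProd.mp hA
  obtain ⟨n, hn⟩ := Filter.nonempty_of_mem hA'
  refine ⟨tensorProd (pure n) q, ?_, ⟨n, rfl⟩⟩
  show A ∈ tensorProd (pure n) q
  rw [mem_tensorProd]
  exact hn

/-- For nonprincipal `p`, `q`, the set `D = {pure n ⊗ q : n ∈ ℕ}` is a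
countable discrete set of nonprincipal ultrafilters on `ℕ × ℕ` with `p ⊗ q ∉ D` and
`p ⊗ q ∈ closure D`; in particular `p ⊗ q` is nonprincipal and is not a discretely weak
P-point of the subspace of nonprincipal ultrafilters on `ℕ × ℕ`. -/
theorem tensorProd_not_discretelyWeakPPoint (p q : Ultrafilter ℕ)
    (hp : ∀ n : ℕ, p ≠ pure n) (hq : ∀ n : ℕ, q ≠ pure n) :
    (∀ s : ℕ × ℕ, tensorProd p q ≠ pure s) ∧
    (Set.range fun n : ℕ => tensorProd (pure n) q).Countable ∧
    (∀ r ∈ Set.range fun n : ℕ => tensorProd (pure n) q, ∀ s : ℕ × ℕ, r ≠ pure s) ∧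
    DiscreteTopology ↥(Set.range fun n : ℕ => tensorProd (pure n) q) ∧
    tensorProd p q ∉ (Set.range fun n : ℕ => tensorProd (pure n) q) ∧
    tensorProd p q ∈ closure (Set.range fun n : ℕ => tensorProd (pure n) q) ∧
    ∀ hnp : ∀ s : ℕ × ℕ, tensorProd p q ≠ pure s,
      ∃ D : Set ↥omegaStar2, D.Countable ∧ DiscreteTopology ↥D ∧
        (⟨tensorProd p q, hnp⟩ : ↥omegaStar2) ∉ D ∧
        (⟨tensorProd p q, hnp⟩ : ↥omegaStar2) ∈ closure D := by
  set D0 := Set.range fun n : ℕ => tensorProd (pure n) q with hD0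
  have hsub : D0 ⊆ omegaStar2 := by
    rintro r ⟨n, rfl⟩
    exact tensor_ne_pure (pure n) q hq
  refine ⟨tensor_ne_pure p q hq, Set.countable_range _,
    fun r hr => by obtain ⟨n, rfl⟩ := hr; exact tensor_ne_pure (pure n) q hq, ?_,
    tensor_notmem_range p q hp, tensor_mem_closure p q, ?_⟩
  · -- discreteness of the ambient subtype
    apply discreteTopology_iff_isOpen_singleton.mpr
    rintro ⟨r, hr⟩
    obtain ⟨n, rfl⟩ := hr
    rw [isOpen_induced_iff]
    refine ⟨{u | (Prod.fst ⁻¹' {n} : Set (ℕ × ℕ)) ∈ u}, ultrafilter_isOpen_basic _, ?_⟩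
    ext ⟨r, hr⟩
    obtain ⟨m, rfl⟩ := hr
    simp only [Set.mem_preimage, Set.mem_setOf_eq, Set.mem_singleton_iff, Subtype.mk.injEq]
    constructor
    · intro hmem
      have hm : m = n := by simpa using (memB_iff q (pure m) n).mp hmem
      subst hm; rfl
    · intro h
      have hm : m = n := tensor_pure_inj q (congrArg Subtype.val h)
      subst hm
      exact (memB_iff q (pure m) m).mpr rfl
  · intro hnp
    refine ⟨Subtype.val ⁻¹' D0, (Set.countable_range _).preimage Subtype.val_injective, ?_, ?_, ?_⟩
    · apply discreteTopology_iff_isOpen_singleton.mpr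
      rintro ⟨⟨r, hr1⟩, hr2⟩
      obtain ⟨n, hn⟩ := hr2
      rw [isOpen_induced_iff]
      refine ⟨Subtype.val ⁻¹' {u | (Prod.fst ⁻¹' {n} : Set (ℕ × ℕ)) ∈ u},
        (ultrafilter_isOpen_basic _).preimage continuous_subtype_val, ?_⟩
      ext ⟨⟨s, hs1⟩, hs2⟩
      obtain ⟨m, hm⟩ := hs2
      simp only [Set.mem_preimage, Set.mem_setOf_eq, Set.mem_singleton_iff, Subtype.mk.injEq]
      constructor
      · intro hmem
        have hm' : tensorProd (pure m) q = s := hm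
        have hn' : tensorProd (pure n) q = r := hn
        apply Subtype.ext; apply Subtype.ext; show s = r
        rw [← hm'] at hmem ⊢
        rw [← hn']
        have : m = n := by simpa using (memB_iff q (pure m) n).mp hmem
        rw [this]
      · intro h
        have hm' : tensorProd (pure m) q = s := hm
        have hn' : tensorProd (pure n) q = r := hn
        replace h : s = r := congrArg (fun x => x.1.1) h
        rw [← hm', ← hn'] at h
        have : m = n := tensor_pure_inj q h
        rw [← hm', this]
        exact (memB_iff q (pure n) n).mpr rfl
    · intro h
      exact tensor_notmem_range p q hp h
    · rw [closure_subtype]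
      have himg : ((Subtype.val : ↥omegaStar2 → Ultrafilter (ℕ × ℕ)) ''
          ((Subtype.val : ↥omegaStar2 → Ultrafilter (ℕ × ℕ)) ⁻¹' D0)) = D0 := by
        rw [Subtype.image_preimage_coe]
        exact Set.inter_eq_self_of_subset_right hsub
      rw [himg]
      exact tensor_mem_closure p q
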